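/- Let n ≥ 1, let ⟨z,w⟩_{n,1} = z₁w̄₁ + ⋯ + zₙw̄ₙ − z_{n+1}w̄_{n+1} on ℂ^{n+1}, let 𝔹ⁿ be the open unit ball of ℂⁿ, and for a nonzero vector z ∈ ℂ^{n+1} let [z] ∈ ℙⁿ denote the complex line it spans. The map from ℂⁿ × 𝔹ⁿ to ℙⁿ × ℙⁿ sending (u, v) to the pair ([(u₁,…,uₙ, 1 + u₁v₁ + ⋯ + uₙvₙ)], [(v̄₁,…,v̄ₙ, 1)]) is a bijection onto the set W₁,₂ = {([z],[w]) ∈ ℙⁿ × ℙⁿ : ⟨z,w⟩_{n,1} ≠ 0 and ⟨w,w⟩_{n,1} < 0}. -/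

import Mathlib

/-- The hermitian form `⟨z,w⟩_{n,1} = z₁w̄₁ + ⋯ + zₙw̄ₙ − z_{n+1}w̄_{n+1}` on `ℂ^{n+1}`. -/
noncomputable def hermForm (n : ℕ) (z w : Fin (n + 1) → ℂ) : ℂ :=
  (∑ i : Fin n, z i.castSucc * starRingEnd ℂ (w i.castSucc)) -
    z (Fin.last n) * starRingEnd ℂ (w (Fin.last n))

/-- The vector `(u₁, …, uₙ, 1 + u₁v₁ + ⋯ + uₙvₙ)`. -/
noncomputable def vecZ' (n : ℕ) (u v : Fin n → ℂ) : Fin (n + 1) → ℂ :=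
  Fin.snoc u (1 + ∑ i : Fin n, u i * v i)

/-- The vector `(v̄₁, …, v̄ₙ, 1)`. -/
noncomputable def vecW' (n : ℕ) (v : Fin n → ℂ) : Fin (n + 1) → ℂ :=
  Fin.snoc (fun i => starRingEnd ℂ (v i)) 1

lemma vecZ'_ne_zero (n : ℕ) (u v : Fin n → ℂ) : vecZ' n u v ≠ 0 := by
  intro h
  by_cases hu : u = 0
  · have := congrFun h (Fin.last n)
    simp [vecZ', hu] at this
  · obtain ⟨i, hi⟩ := Function.ne_iff.mp hu
    have := congrFun h i.castSucc
    simp [vecZ'] at this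
    exact hi (by simpa using this)

lemma vecW'_ne_zero (n : ℕ) (v : Fin n → ℂ) : vecW' n v ≠ 0 := by
  intro h
  simpa [vecW'] using congrFun h (Fin.last n)

/-- The map `ℂⁿ × 𝔹ⁿ → ℙⁿ × ℙⁿ`, `(u,v) ↦ ([(u, 1 + u·v)], [(v̄, 1)])`. -/
noncomputable def F₁₂ (n : ℕ) :
    EuclideanSpace ℂ (Fin n) × EuclideanSpace ℂ (Fin n) →
      Projectivization ℂ (Fin (n + 1) → ℂ) × Projectivization ℂ (Fin (n + 1) → ℂ) :=
  fun p =>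
    (Projectivization.mk ℂ (vecZ' n p.1 p.2) (vecZ'_ne_zero n p.1 p.2),
     Projectivization.mk ℂ (vecW' n p.2) (vecW'_ne_zero n p.2))

/-- The domain `W₁,₂ = {([z],[w]) : ⟨z,w⟩_{n,1} ≠ 0 and ⟨w,w⟩_{n,1} < 0}` in `ℙⁿ × ℙⁿ`. -/
def W₁₂ (n : ℕ) :
    Set (Projectivization ℂ (Fin (n + 1) → ℂ) × Projectivization ℂ (Fin (n + 1) → ℂ)) :=
  {P | ∃ (z w : Fin (n + 1) → ℂ) (hz : z ≠ 0) (hw : w ≠ 0),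
    P = (Projectivization.mk ℂ z hz, Projectivization.mk ℂ w hw) ∧
    hermForm n z w ≠ 0 ∧ (hermForm n w w).re < 0}


lemma hermZW (n : ℕ) (u v : Fin n → ℂ) :
    hermForm n (vecZ' n u v) (vecW' n v) = -1 := by
  simp only [hermForm, vecZ', vecW', Fin.snoc_castSucc, Fin.snoc_last, map_one, mul_one,
    Complex.conj_conj]
  ring

lemma hermWW (n : ℕ) (v : Fin n → ℂ) :
    (hermForm n (vecW' n v) (vecW' n v)).re = (∑ i, Complex.normSq (v i)) - 1 := by
  simp only [hermForm, vecW', Fin.snoc_castSucc, Fin.snoc_last, map_one, mul_one,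
    Complex.conj_conj]
  have : ∀ i : Fin n, starRingEnd ℂ (v i) * v i = (Complex.normSq (v i) : ℂ) := fun i => by
    rw [mul_comm, Complex.mul_conj]
  rw [Fintype.sum_congr _ _ this]
  push_cast
  simp

lemma ball_iff (n : ℕ) (v : EuclideanSpace ℂ (Fin n)) :
    v ∈ Metric.ball (0 : EuclideanSpace ℂ (Fin n)) 1 ↔ ∑ i, Complex.normSq (v i) < 1 := by
  rw [Metric.mem_ball, dist_zero_right, EuclideanSpace.norm_eq]
  have h0 : (0:ℝ) ≤ ∑ i, ‖v i‖ ^ 2 := Finset.sum_nonneg fun i _ => sq_nonneg _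
  constructor
  · intro h
    have := Real.sq_sqrt h0
    have h2 : Real.sqrt (∑ i, ‖v i‖ ^ 2) ^ 2 < 1 := by nlinarith [Real.sqrt_nonneg (∑ i, ‖v i‖ ^ 2)]
    rw [this] at h2
    calc ∑ i, Complex.normSq (v i) = ∑ i, ‖v i‖ ^ 2 := by
          refine Finset.sum_congr rfl fun i _ => ?_
          rw [Complex.normSq_eq_norm_sq]
      _ < 1 := h2
  · intro h
    have h2 : ∑ i, ‖v i‖ ^ 2 < 1 := by
      calc ∑ i, ‖v i‖ ^ 2 = ∑ i, Complex.normSq (v i) := by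
            refine Finset.sum_congr rfl fun i _ => ?_
            rw [Complex.normSq_eq_norm_sq]
        _ < 1 := h
    calc Real.sqrt (∑ i, ‖v i‖ ^ 2) < Real.sqrt 1 := by
          exact Real.sqrt_lt_sqrt h0 h2
      _ = 1 := Real.sqrt_one

/-- Example 6.3: `(u,v) ↦ ([(u, 1 + u·v)], [(v̄, 1)])` is a bijection from `ℂⁿ × 𝔹ⁿ`
onto `W₁,₂`. -/
theorem stmt_13 (n : ℕ) (hn : 1 ≤ n) :
    Set.BijOn (F₁₂ n)
      ((Set.univ : Set (EuclideanSpace ℂ (Fin n))) ×ˢ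
        Metric.ball (0 : EuclideanSpace ℂ (Fin n)) 1)
      (W₁₂ n) := by
  constructor
  · -- MapsTo
    rintro ⟨u, v⟩ ⟨-, hv⟩
    refine ⟨vecZ' n u v, vecW' n v, vecZ'_ne_zero n u v, vecW'_ne_zero n v, rfl, ?_, ?_⟩
    · rw [hermZW]; norm_num
    · rw [hermWW]
      have := (ball_iff n v).mp hv
      linarith
  constructor
  · -- InjOn
    rintro ⟨u, v⟩ ⟨-, hv⟩ ⟨u', v'⟩ ⟨-, hv'⟩ h
    simp only [F₁₂, Prod.mk.injEq] at h
    obtain ⟨h1, h2⟩ := h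
    rw [Projectivization.mk_eq_mk_iff] at h1 h2
    obtain ⟨a, ha⟩ := h2
    have hlast := congrFun ha (Fin.last n)
    have ha1 : (a : ℂ) = 1 := by
      simpa [vecW', Units.smul_def] using hlast
    have hvv : v = v' := by
      ext i
      have h3 := congrFun ha i.castSucc
      simp only [vecW', Pi.smul_apply, Fin.snoc_castSucc, Units.smul_def, smul_eq_mul, ha1,
        one_mul] at h3
      have := congrArg (starRingEnd ℂ) h3
      simpa using this.symm
    subst hvv
    obtain ⟨b, hb⟩ := h1
    have hblast := congrFun hb (Fin.last n)
    have huu : ∀ i, u i = (b : ℂ) * u' i := fun i => by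
      have := congrFun hb i.castSucc
      simpa [vecZ', Units.smul_def] using this.symm
    simp only [vecZ', Pi.smul_apply, Fin.snoc_last, Units.smul_def, smul_eq_mul] at hblast
    have hsum : ∑ i, u i * v i = (b:ℂ) * ∑ i, u' i * v i := by
      rw [Finset.mul_sum]
      exact Finset.sum_congr rfl fun i _ => by rw [huu i]; ring
    have hb1 : (b : ℂ) = 1 := by
      have h4 : 1 + (b:ℂ) * ∑ i, u' i * v i = (b:ℂ) * (1 + ∑ i, u' i * v i) := by
        rw [← hsum]; exact hblast.symm
      linear_combination -h4
    have : u = u' := PiLp.ext fun i => by rw [huu i, hb1, one_mul]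
    simp [this]
  · -- SurjOn
    rintro ⟨P1, P2⟩ ⟨z, w, hz, hw, hP, hzw, hww⟩
    set wl := w (Fin.last n) with hwl_def
    have hre : (hermForm n w w).re = (∑ i : Fin n, Complex.normSq (w i.castSucc)) - Complex.normSq wl := by
      simp only [hermForm]
      have : ∀ i : Fin n, w i.castSucc * starRingEnd ℂ (w i.castSucc) = (Complex.normSq (w i.castSucc) : ℂ) :=
        fun i => Complex.mul_conj _
      rw [Fintype.sum_congr _ _ this, Complex.mul_conj]
      push_cast
      simp
      rfl
    have hsumlt : (∑ i : Fin n, Complex.normSq (w i.castSucc)) < Complex.normSq wl := by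
      rw [hre] at hww; linarith
    have hwl : wl ≠ 0 := by
      intro h0
      rw [h0, map_zero] at hsumlt
      exact absurd hsumlt (not_lt.mpr (Finset.sum_nonneg fun i _ => Complex.normSq_nonneg _))
    set v : EuclideanSpace ℂ (Fin n) := WithLp.toLp 2 (fun i : Fin n => starRingEnd ℂ (w i.castSucc / wl)) with hv_def
    set lam : ℂ := -(hermForm n z w) / starRingEnd ℂ wl with hlam_def
    have hlam : lam ≠ 0 := by
      apply div_ne_zero (neg_ne_zero.mpr hzw)
      simpa using hwl
    set u : EuclideanSpace ℂ (Fin n) := WithLp.toLp 2 (fun i : Fin n => z i.castSucc / lam) with hu_def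
    refine ⟨(u, v), ⟨Set.mem_univ _, ?_⟩, ?_⟩
    · rw [ball_iff]
      have : ∀ i : Fin n, Complex.normSq (v i) = Complex.normSq (w i.castSucc) / Complex.normSq wl := by
        intro i
        simp [hv_def, Complex.normSq_conj, Complex.normSq_div]
      rw [Fintype.sum_congr _ _ this, ← Finset.sum_div]
      rw [div_lt_one (Complex.normSq_pos.mpr hwl)]
      exact hsumlt
    · rw [hP]
      simp only [F₁₂, Prod.mk.injEq]
      constructor
      · rw [Projectivization.mk_eq_mk_iff]
        refine ⟨Units.mk0 lam⁻¹ (inv_ne_zero hlam), ?_⟩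
        funext j
        rcases Fin.eq_castSucc_or_eq_last j with ⟨i, rfl⟩ | rfl
        · simp only [vecZ', Pi.smul_apply, Fin.snoc_castSucc, Units.smul_mk0, smul_eq_mul, hu_def]
          field_simp
        · simp only [vecZ', Pi.smul_apply, Fin.snoc_last, Units.smul_mk0, smul_eq_mul]
          have hcwl : starRingEnd ℂ wl ≠ 0 := by simpa using hwl
          have hkey : z (Fin.last n) = lam + (∑ i : Fin n, z i.castSucc * starRingEnd ℂ (w i.castSucc)) / starRingEnd ℂ wl := by
            rw [hlam_def, hermForm]
            field_simp
            try ring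
          have hsum : ∑ i : Fin n, u i * v i = (∑ i : Fin n, z i.castSucc * starRingEnd ℂ (w i.castSucc)) / (lam * starRingEnd ℂ wl) := by
            rw [Finset.sum_div]
            refine Finset.sum_congr rfl fun i _ => ?_
            simp only [hu_def, hv_def, map_div₀, Complex.conj_conj]
            field_simp
            try ring
          rw [hsum, hkey]
          field_simp
          try ring
      · rw [Projectivization.mk_eq_mk_iff]
        refine ⟨Units.mk0 wl⁻¹ (inv_ne_zero hwl), ?_⟩
        funext j
        rcases Fin.eq_castSucc_or_eq_last j with ⟨i, rfl⟩ | rfl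
        · simp only [vecW', Pi.smul_apply, Fin.snoc_castSucc, Units.smul_mk0, smul_eq_mul,
            hv_def, Complex.conj_conj]
          field_simp
        · simp only [vecW', Pi.smul_apply, Fin.snoc_last, Units.smul_mk0, smul_eq_mul]
          field_simp
          rfl
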